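/- For 1 ≤ m < n ≤ N, the vector U₁^σ⋯U_N^σ ζ^{(m,n)}, where ζ^{(m,n)} has α₁ in position m and α₂ in position n and zeros elsewhere, has components: position 0: c^N g w (gz)^{m-1}(α₁ + (gz)^{n-m} α₂); positions 1 ≤ k < m: c^N (gz)^{m-k-1}(gw)²(α₁ + (gz)^{n-m}α₂); position m: c^N (g z⁻ α₁ + (gw)²(gz)^{n-m-1} α₂); positions m < k < n: c^N (gz)^{n-k-1}(gw)² α₂; position n: c^N g z⁻ α₂; positions k > n: 0. -/

import Mathlib

/-- The one-step evolution matrix `U_ℓ^σ` of size `(N+1)×(N+1)`. -/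
def Umat (N ℓ : ℕ) (c g w z zm : ℂ) : Matrix (Fin (N + 1)) (Fin (N + 1)) ℂ :=
  fun i j =>
    if (i : ℕ) = 0 then
      c * g * ((if (j : ℕ) = 0 then z else 0) + (if (j : ℕ) = ℓ then w else 0))
    else if (i : ℕ) = ℓ then
      c * g * ((if (j : ℕ) = 0 then w else 0) + (if (j : ℕ) = ℓ then zm else 0))
    else if i = j then c else 0

def Vvec (N m n : ℕ) (c g w z zm α₁ α₂ : ℂ) (t : ℕ) : Fin (N + 1) → ℂ := fun k =>
  if n ≤ t then c ^ (N - t) * (if (k : ℕ) = m then α₁ else if (k : ℕ) = n then α₂ else 0)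
  else if m ≤ t then
    if (k : ℕ) = 0 then c ^ (N - t) * g * w * (g * z) ^ (n - t - 1) * α₂
    else if (k : ℕ) = m then c ^ (N - t) * α₁
    else if t < (k : ℕ) ∧ (k : ℕ) < n then
      c ^ (N - t) * (g * z) ^ (n - (k : ℕ) - 1) * (g * w) ^ 2 * α₂
    else if (k : ℕ) = n then c ^ (N - t) * g * zm * α₂
    else 0
  else
    if (k : ℕ) = 0 then
      c ^ (N - t) * g * w * (g * z) ^ (m - t - 1) * (α₁ + (g * z) ^ (n - m) * α₂)
    else if t < (k : ℕ) ∧ (k : ℕ) < m then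
      c ^ (N - t) * (g * z) ^ (m - (k : ℕ) - 1) * (g * w) ^ 2 * (α₁ + (g * z) ^ (n - m) * α₂)
    else if (k : ℕ) = m then
      c ^ (N - t) * (g * zm * α₁ + (g * w) ^ 2 * (g * z) ^ (n - m - 1) * α₂)
    else if m < (k : ℕ) ∧ (k : ℕ) < n then
      c ^ (N - t) * (g * z) ^ (n - (k : ℕ) - 1) * (g * w) ^ 2 * α₂
    else if (k : ℕ) = n then c ^ (N - t) * g * zm * α₂
    else 0

lemma key_sum (N : ℕ) (v : Fin (N+1) → ℂ) (a : ℕ) (ha : a < N + 1) (x : ℂ) :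
    (∑ j : Fin (N+1), (if (j : ℕ) = a then x else 0) * v j) = x * v ⟨a, ha⟩ := by
  rw [Finset.sum_eq_single (⟨a, ha⟩ : Fin (N+1))]
  · simp
  · intro b _ hb
    have : (b : ℕ) ≠ a := fun h => hb (Fin.ext h)
    simp [this]
  · simp

lemma key_sum2 (N : ℕ) (v : Fin (N+1) → ℂ) (c₀ x y : ℂ) (a : ℕ) (ha : a < N + 1)
    (ha0 : a ≠ 0) :
    (∑ j : Fin (N+1), c₀ * ((if (j : ℕ) = 0 then x else 0) + if (j : ℕ) = a then y else 0) * v j)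
      = c₀ * (x * v 0 + y * v ⟨a, ha⟩) := by
  have : ∀ j : Fin (N+1),
      c₀ * ((if (j:ℕ)=0 then x else 0) + if (j:ℕ)=a then y else 0) * v j
      = (if (j:ℕ)=0 then c₀*x else 0) * v j + (if (j:ℕ)=a then c₀*y else 0) * v j := by
    intro j; split_ifs <;> first | (exfalso; first | assumption | omega) | ring1
  rw [Finset.sum_congr rfl fun j _ => this j, Finset.sum_add_distrib,
    key_sum N v 0 (by omega), key_sum N v a ha]
  have h00 : (⟨0, by omega⟩ : Fin (N+1)) = 0 := rfl
  rw [h00]; ring1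

lemma Umat_mulVec (N ℓ : ℕ) (hℓ0 : 1 ≤ ℓ) (hℓN : ℓ < N + 1) (c g w z zm : ℂ)
    (v : Fin (N + 1) → ℂ) (k : Fin (N + 1)) :
    (Umat N ℓ c g w z zm).mulVec v k =
      if (k : ℕ) = 0 then c * g * (z * v 0 + w * v ⟨ℓ, hℓN⟩)
      else if (k : ℕ) = ℓ then c * g * (w * v 0 + zm * v ⟨ℓ, hℓN⟩)
      else c * v k := by
  simp only [Matrix.mulVec, dotProduct, Umat]
  by_cases h0 : (k : ℕ) = 0
  · simp only [h0, if_true]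
    exact key_sum2 N v _ z w ℓ hℓN (by omega)
  · simp only [h0, if_false]
    by_cases hℓ : (k : ℕ) = ℓ
    · simp only [hℓ, if_true]
      exact key_sum2 N v _ w zm ℓ hℓN (by omega)
    · simp only [hℓ, if_false]
      rw [Finset.sum_eq_single k]
      · simp [mul_comm]
      · intro b _ hb
        rw [if_neg (Ne.symm hb), zero_mul]
      · simp


lemma VvecA (N m n : ℕ) (c g w z zm α₁ α₂ : ℂ) (t : ℕ) (h : n ≤ t) (k : Fin (N+1)) :
    Vvec N m n c g w z zm α₁ α₂ t k
      = c ^ (N - t) * (if (k : ℕ) = m then α₁ else if (k : ℕ) = n then α₂ else 0) := by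
  simp only [Vvec, if_pos h]

lemma VvecB (N m n : ℕ) (c g w z zm α₁ α₂ : ℂ) (t : ℕ) (h1 : m ≤ t) (h2 : t < n)
    (k : Fin (N+1)) :
    Vvec N m n c g w z zm α₁ α₂ t k
      = if (k : ℕ) = 0 then c ^ (N - t) * g * w * (g * z) ^ (n - t - 1) * α₂
        else if (k : ℕ) = m then c ^ (N - t) * α₁
        else if t < (k : ℕ) ∧ (k : ℕ) < n then
          c ^ (N - t) * (g * z) ^ (n - (k : ℕ) - 1) * (g * w) ^ 2 * α₂
        else if (k : ℕ) = n then c ^ (N - t) * g * zm * α₂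
        else 0 := by
  simp only [Vvec, if_neg (by omega : ¬ n ≤ t), if_pos h1]

lemma VvecC (N m n : ℕ) (c g w z zm α₁ α₂ : ℂ) (t : ℕ) (h1 : t < m) (h2 : m < n)
    (k : Fin (N+1)) :
    Vvec N m n c g w z zm α₁ α₂ t k
      = if (k : ℕ) = 0 then
          c ^ (N - t) * g * w * (g * z) ^ (m - t - 1) * (α₁ + (g * z) ^ (n - m) * α₂)
        else if t < (k : ℕ) ∧ (k : ℕ) < m then
          c ^ (N - t) * (g * z) ^ (m - (k : ℕ) - 1) * (g * w) ^ 2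
            * (α₁ + (g * z) ^ (n - m) * α₂)
        else if (k : ℕ) = m then
          c ^ (N - t) * (g * zm * α₁ + (g * w) ^ 2 * (g * z) ^ (n - m - 1) * α₂)
        else if m < (k : ℕ) ∧ (k : ℕ) < n then
          c ^ (N - t) * (g * z) ^ (n - (k : ℕ) - 1) * (g * w) ^ 2 * α₂
        else if (k : ℕ) = n then c ^ (N - t) * g * zm * α₂
        else 0 := by
  simp only [Vvec, if_neg (by omega : ¬ n ≤ t), if_neg (by omega : ¬ m ≤ t)]

set_option maxHeartbeats 2000000 in
lemma step (N m n : ℕ) (hm : 1 ≤ m) (hmn : m < n) (hnN : n ≤ N)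
    (c g w z zm α₁ α₂ : ℂ) (t : ℕ) (ht : t < N) :
    (Umat N (t + 1) c g w z zm).mulVec (Vvec N m n c g w z zm α₁ α₂ (t + 1))
      = Vvec N m n c g w z zm α₁ α₂ t := by
  funext k
  rw [Umat_mulVec N (t+1) (by omega) (by omega)]
  rcases le_or_gt n t with hA | hnt
  · -- region A : n ≤ t
    rw [VvecA N m n c g w z zm α₁ α₂ (t+1) (by omega),
        VvecA N m n c g w z zm α₁ α₂ (t+1) (by omega),
        VvecA N m n c g w z zm α₁ α₂ (t+1) (by omega),
        VvecA N m n c g w z zm α₁ α₂ t hA]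
    rw [Fin.val_zero]; simp only [Fin.val_mk]
    split_ifs <;>
      first
        | (exfalso; first | assumption | omega)
        | ring1
        | (rw [show N - t = N - (t+1) + 1 by omega, pow_succ]; ring1)
            | (rw [show n - (k:ℕ) - 1 = n - (t+1) - 1 by omega,
                  show N - t = N - (t+1) + 1 by omega, pow_succ]; ring1)
            | (rw [show m - (k:ℕ) - 1 = m - (t+1) - 1 by omega,
                  show N - t = N - (t+1) + 1 by omega, pow_succ]; ring1)
  · rcases le_or_gt m t with hB | hmt
    · -- region: m ≤ t < n, so t+1 is in (m, n]
      rw [VvecB N m n c g w z zm α₁ α₂ t hB hnt]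
      rcases eq_or_lt_of_le (show t + 1 ≤ n by omega) with hBn | hBn
      · -- t + 1 = n
        rw [VvecA N m n c g w z zm α₁ α₂ (t+1) (by omega),
            VvecA N m n c g w z zm α₁ α₂ (t+1) (by omega),
            VvecA N m n c g w z zm α₁ α₂ (t+1) (by omega)]
        rw [Fin.val_zero]; simp only [Fin.val_mk]
        split_ifs <;>
          first
            | (exfalso; first | assumption | omega)
            | ring1
            | (rw [show N - t = N - (t+1) + 1 by omega, pow_succ]; ring1)
            | (rw [show n - (k:ℕ) - 1 = n - (t+1) - 1 by omega,
                  show N - t = N - (t+1) + 1 by omega, pow_succ]; ring1)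
            | (rw [show m - (k:ℕ) - 1 = m - (t+1) - 1 by omega,
                  show N - t = N - (t+1) + 1 by omega, pow_succ]; ring1)
            | (rw [show N - t = N - (t+1) + 1 by omega,
                  show n - t - 1 = 0 by omega, pow_succ]; ring1)
      · -- m ≤ t, t+1 < n
        rw [VvecB N m n c g w z zm α₁ α₂ (t+1) (by omega) (by omega),
            VvecB N m n c g w z zm α₁ α₂ (t+1) (by omega) (by omega),
            VvecB N m n c g w z zm α₁ α₂ (t+1) (by omega) (by omega)]
        rw [Fin.val_zero]; simp only [Fin.val_mk]
        split_ifs <;>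
          first
            | (exfalso; first | assumption | omega)
            | ring1
            | (rw [show N - t = N - (t+1) + 1 by omega, pow_succ]; ring1)
            | (rw [show n - (k:ℕ) - 1 = n - (t+1) - 1 by omega,
                  show N - t = N - (t+1) + 1 by omega, pow_succ]; ring1)
            | (rw [show m - (k:ℕ) - 1 = m - (t+1) - 1 by omega,
                  show N - t = N - (t+1) + 1 by omega, pow_succ]; ring1)
            | (rw [show N - t = N - (t+1) + 1 by omega,
                  show n - t - 1 = (n - (t+1) - 1) + 1 by omega, pow_succ, pow_succ]; ring1)
            | (rw [show N - t = N - (t+1) + 1 by omega,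
                  show n - t - 1 = n - (t+1) - 1 + 1 by omega,
                  show n - (t+1) - 1 = n - (t+1+1) by omega, pow_succ]; ring1)
    · -- region: t < m, so t+1 ≤ m
      rw [VvecC N m n c g w z zm α₁ α₂ t hmt hmn]
      rcases eq_or_lt_of_le (show t + 1 ≤ m by omega) with hDm | hDm
      · -- t + 1 = m
        rw [VvecB N m n c g w z zm α₁ α₂ (t+1) (by omega) (by omega),
            VvecB N m n c g w z zm α₁ α₂ (t+1) (by omega) (by omega),
            VvecB N m n c g w z zm α₁ α₂ (t+1) (by omega) (by omega)]
        rw [Fin.val_zero]; simp only [Fin.val_mk]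
        split_ifs <;>
          first
            | (exfalso; first | assumption | omega)
            | ring1
            | (rw [show N - t = N - (t+1) + 1 by omega, pow_succ]; ring1)
            | (rw [show n - (k:ℕ) - 1 = n - (t+1) - 1 by omega,
                  show N - t = N - (t+1) + 1 by omega, pow_succ]; ring1)
            | (rw [show m - (k:ℕ) - 1 = m - (t+1) - 1 by omega,
                  show N - t = N - (t+1) + 1 by omega, pow_succ]; ring1)
            | (rw [show N - t = N - (t+1) + 1 by omega, show m - t - 1 = 0 by omega,
                  show n - m = (n - (t+1) - 1) + 1 by omega, pow_succ, pow_succ]; ring1)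
            | (rw [show N - t = N - (t+1) + 1 by omega,
                  show n - m - 1 = n - (t+1) - 1 by omega, pow_succ]; ring1)
      · -- t + 1 < m
        rw [VvecC N m n c g w z zm α₁ α₂ (t+1) (by omega) hmn,
            VvecC N m n c g w z zm α₁ α₂ (t+1) (by omega) hmn,
            VvecC N m n c g w z zm α₁ α₂ (t+1) (by omega) hmn]
        rw [Fin.val_zero]; simp only [Fin.val_mk]
        split_ifs <;>
          first
            | (exfalso; first | assumption | omega)
            | ring1
            | (rw [show N - t = N - (t+1) + 1 by omega, pow_succ]; ring1)
            | (rw [show n - (k:ℕ) - 1 = n - (t+1) - 1 by omega,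
                  show N - t = N - (t+1) + 1 by omega, pow_succ]; ring1)
            | (rw [show m - (k:ℕ) - 1 = m - (t+1) - 1 by omega,
                  show N - t = N - (t+1) + 1 by omega, pow_succ]; ring1)
            | (rw [show N - t = N - (t+1) + 1 by omega,
                  show m - t - 1 = (m - (t+1) - 1) + 1 by omega, pow_succ, pow_succ]; ring1)

lemma prod_lemma (N m n : ℕ) (hm : 1 ≤ m) (hmn : m < n) (hnN : n ≤ N)
    (c g w z zm α₁ α₂ : ℂ) (d : ℕ) :
    ∀ (t : ℕ), t + d = N →
      Matrix.mulVec (((List.range' t d).map fun ℓ => Umat N (ℓ + 1) c g w z zm).prod)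
          (fun j => if (j : ℕ) = m then α₁ else if (j : ℕ) = n then α₂ else 0)
        = Vvec N m n c g w z zm α₁ α₂ t := by
  induction d with
  | zero =>
    intro t ht
    simp only [List.range', List.map_nil, List.prod_nil, Matrix.one_mulVec]
    funext k
    rw [show t = N by omega, VvecA N m n c g w z zm α₁ α₂ N hnN, Nat.sub_self, pow_zero,
      one_mul]
  | succ d ih =>
    intro t ht
    rw [List.range'_succ, List.map_cons, List.prod_cons, ← Matrix.mulVec_mulVec,
      ih (t + 1) (by omega), step N m n hm hmn hnN c g w z zm α₁ α₂ t (by omega)]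


/-- components of `U₁^σ⋯U_N^σ ζ^{(m,n)}`, where `ζ^{(m,n)}` has `α₁`
at position `m`, `α₂` at position `n` (`1 ≤ m < n ≤ N`) and zeros elsewhere. -/
theorem Umat_prod_zeta_mn (N m n : ℕ) (hm : 1 ≤ m) (hmn : m < n) (hnN : n ≤ N)
    (c g w z zm : ℂ) (α₁ α₂ : ℂ) (k : Fin (N + 1)) :
    Matrix.mulVec (((List.range N).map (fun ℓ => Umat N (ℓ + 1) c g w z zm)).prod)
        (fun j => if (j : ℕ) = m then α₁ else if (j : ℕ) = n then α₂ else 0) k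
      = if (k : ℕ) = 0 then
          c ^ N * g * w * (g * z) ^ (m - 1) * (α₁ + (g * z) ^ (n - m) * α₂)
        else if (k : ℕ) < m then
          c ^ N * (g * z) ^ (m - (k : ℕ) - 1) * (g * w) ^ 2 * (α₁ + (g * z) ^ (n - m) * α₂)
        else if (k : ℕ) = m then
          c ^ N * (g * zm * α₁ + (g * w) ^ 2 * (g * z) ^ (n - m - 1) * α₂)
        else if (k : ℕ) < n then
          c ^ N * (g * z) ^ (n - (k : ℕ) - 1) * (g * w) ^ 2 * α₂
        else if (k : ℕ) = n then
          c ^ N * g * zm * α₂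
        else 0 := by
  rw [List.range_eq_range', prod_lemma N m n hm hmn hnN c g w z zm α₁ α₂ N 0 (by omega),
    VvecC N m n c g w z zm α₁ α₂ 0 (by omega) hmn]
  simp only [Nat.sub_zero]
  split_ifs <;> first | rfl | (exfalso; omega)
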